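/- Let x be a nilpotent endomorphism of a finite-dimensional vector space V, let ℓ ≥ 1, and let M ⊆ im x^ℓ be an x-stable subspace. Then for every k with 1 ≤ k ≤ ℓ, the map induced by x gives a linear isomorphism from (x^k)^{-1}(M)/ker x^k onto (x^{k-1})^{-1}(M)/ker x^{k-1}; consequently dim((x^k)^{-1}(M)/(x^{k-1})^{-1}(M)) = dim(ker x^k/ker x^{k-1}). -/
import Mathlib


open Module

theorem aux_finrank_comap {K V : Type*} [Field K] [AddCommGroup V] [Module K V]
    [FiniteDimensional K V]
    (f : V →ₗ[K] V) (N : Submodule K V) (h : N ≤ LinearMap.range f) :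
    finrank K ↥(Submodule.comap f N) = finrank K ↥N + finrank K ↥(LinearMap.ker f) := by
  have h1 := LinearMap.finrank_range_add_finrank_ker (f.domRestrict (Submodule.comap f N))
  rw [LinearMap.range_domRestrict, LinearMap.ker_domRestrict] at h1
  have h2 : Submodule.map f (Submodule.comap f N) = N := by
    rw [Submodule.map_comap_eq, inf_eq_right.mpr h]
  have hker : LinearMap.ker f ≤ Submodule.comap f N := by
    intro v hv
    simp only [Submodule.mem_comap, LinearMap.mem_ker.mp hv]
    exact N.zero_mem
  have h3 : finrank K ↥(Submodule.comap (Submodule.comap f N).subtype (LinearMap.ker f))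
      = finrank K ↥(LinearMap.ker f) :=
    (Submodule.comapSubtypeEquivOfLe hker).finrank_eq
  rw [h2, h3] at h1
  omega

/-- Let `x` be a nilpotent endomorphism of a finite-dimensional space `V`, `ℓ ≥ 1`, and
`M ⊆ im x^ℓ` an `x`-stable subspace.  For `1 ≤ k ≤ ℓ`, the map induced by `x` gives a
linear isomorphism `(x^k)⁻¹(M)/ker x^k ≅ (x^{k-1})⁻¹(M)/ker x^{k-1}`: it is well defined,
injective and surjective; consequently
`dim((x^k)⁻¹(M)/(x^{k-1})⁻¹(M)) = dim(ker x^k / ker x^{k-1})`. -/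
theorem stmt6 {K V : Type*} [Field K] [AddCommGroup V] [Module K V] [FiniteDimensional K V]
    (x : V →ₗ[K] V) (hnil : IsNilpotent x) (ℓ : ℕ) (hℓ : 1 ≤ ℓ)
    (M : Submodule K V) (hM : M ≤ LinearMap.range (x ^ ℓ)) (hMx : ∀ v ∈ M, x v ∈ M)
    (k : ℕ) (hk1 : 1 ≤ k) (hkℓ : k ≤ ℓ) :
    -- the map induced by `x` is well defined on the subquotients:
    (∀ v ∈ Submodule.comap (x ^ k) M, x v ∈ Submodule.comap (x ^ (k - 1)) M) ∧
    (∀ v ∈ LinearMap.ker (x ^ k), x v ∈ LinearMap.ker (x ^ (k - 1))) ∧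
    -- injectivity of the induced map:
    (∀ v ∈ Submodule.comap (x ^ k) M,
      x v ∈ LinearMap.ker (x ^ (k - 1)) → v ∈ LinearMap.ker (x ^ k)) ∧
    -- surjectivity of the induced map:
    (Submodule.comap (x ^ (k - 1)) M ≤
      LinearMap.ker (x ^ (k - 1)) ⊔ Submodule.map x (Submodule.comap (x ^ k) M)) ∧
    -- consequence on dimensions:
    (finrank K ↥(Submodule.comap (x ^ k) M) - finrank K ↥(Submodule.comap (x ^ (k - 1)) M)
      = finrank K ↥(LinearMap.ker (x ^ k)) - finrank K ↥(LinearMap.ker (x ^ (k - 1)))) := by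
  have hkk : k - 1 + 1 = k := by omega
  have hxk : x ^ k = x ^ (k - 1) * x := by rw [← pow_succ, hkk]
  have hsplit : ∀ v : V, (x ^ k) v = (x ^ (k - 1)) (x v) := by
    intro v; rw [hxk]; rfl
  refine ⟨?_, ?_, ?_, ?_, ?_⟩
  · intro v hv
    simp only [Submodule.mem_comap] at hv ⊢
    rw [← hsplit]; exact hv
  · intro v hv
    simp only [LinearMap.mem_ker] at hv ⊢
    rw [← hsplit]; exact hv
  · intro v _ hv
    simp only [LinearMap.mem_ker] at hv ⊢
    rw [hsplit]; exact hv
  · intro v hv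
    simp only [Submodule.mem_comap] at hv
    obtain ⟨z, hz⟩ := hM hv
    set u := (x ^ (ℓ - k)) z with hu
    have hxu : (x ^ k) u = (x ^ ℓ) z := by
      rw [hu, ← Module.End.mul_apply, ← pow_add]
      congr 2
      omega
    refine Submodule.mem_sup.mpr ⟨v - x u, ?_, x u, ?_, by abel⟩
    · simp only [LinearMap.mem_ker, map_sub]
      rw [← hsplit, hxu, hz, sub_self]
    · exact Submodule.mem_map_of_mem (by simpa only [Submodule.mem_comap, hxu, hz] using hv)
  · have hrange : ∀ m : ℕ, m ≤ ℓ → M ≤ LinearMap.range (x ^ m) := by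
      intro m hm
      refine hM.trans ?_
      have : x ^ ℓ = x ^ m * x ^ (ℓ - m) := by rw [← pow_add]; congr 1; omega
      rw [this]
      intro w hw
      obtain ⟨z, hz⟩ := hw
      exact ⟨(x ^ (ℓ - m)) z, hz⟩
    rw [aux_finrank_comap (x ^ k) M (hrange k hkℓ),
      aux_finrank_comap (x ^ (k - 1)) M (hrange (k - 1) (by omega))]
    omega
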